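/- With the hypotheses of the main theorem (τ of order q, n ≥ 3), the conjugation action of S_n ≅ B_n(σ)/A_n(σ) on A_n(σ) ≅ (ℤ/qℤ)^{n-1} × ℤ/(q/gcd(q,2))ℤ defines an injective group homomorphism m: S_n → Aut(A_n(σ)), provided q ≥ 3. -/

import Mathlib

/-- The shift of a permutation of `ℕ` up by `d`: fixes `{0,…,d-1}` and acts as `σ`
conjugated by `k ↦ k + d` above. -/
def shift (d : ℕ) (σ : Equiv.Perm ℕ) : Equiv.Perm ℕ where
  toFun k := if k < d then k else σ (k - d) + d
  invFun k := if k < d then k else σ⁻¹ (k - d) + d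
  left_inv k := by
    by_cases h : k < d
    · simp [h]
    · dsimp only
      rw [if_neg h, if_neg (by omega), Nat.add_sub_cancel, Equiv.Perm.coe_inv, Equiv.symm_apply_apply]
      omega
  right_inv k := by
    by_cases h : k < d
    · simp [h]
    · dsimp only
      rw [if_neg h, if_neg (by omega), Nat.add_sub_cancel, Equiv.Perm.coe_inv, Equiv.apply_symm_apply]
      omega

/-- The involution of `ℕ` swapping the blocks `{0,…,d-1}` and `{d,…,2d-1}`. -/
def theta (d : ℕ) : Equiv.Perm ℕ :=
  Function.Involutive.toPerm
    (fun k => if k < d then k + d else if k < 2 * d then k - d else k)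
    (by intro k; dsimp only; split_ifs <;> omega)

theorem Equiv.Perm.inv_apply_self {α : Type*} (f : Equiv.Perm α) (x : α) : f⁻¹ (f x) = x :=
  f.symm_apply_apply x

theorem Equiv.Perm.apply_inv_self {α : Type*} (f : Equiv.Perm α) (x : α) : f (f⁻¹ x) = x :=
  f.apply_symm_apply x

namespace Stmt19

open Equiv

lemma shift_apply (m : ℕ) (x : Perm ℕ) (k : ℕ) :
    shift m x k = if k < m then k else x (k - m) + m := rfl

lemma shift_one (m : ℕ) : shift m (1 : Perm ℕ) = 1 := by
  ext k; simp only [shift_apply, Perm.one_apply]; split_ifs <;> omega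

lemma shift_mul (m : ℕ) (x y : Perm ℕ) : shift m (x * y) = shift m x * shift m y := by
  ext k
  simp only [shift_apply, Perm.mul_apply]
  by_cases h : k < m
  · simp [h]
  · simp only [if_neg h]
    rw [if_neg (by omega : ¬ y (k - m) + m < m), Nat.add_sub_cancel]

def shiftHom (m : ℕ) : Perm ℕ →* Perm ℕ :=
  { toFun := shift m, map_one' := shift_one m, map_mul' := shift_mul m }

lemma shift_inv (m : ℕ) (x : Perm ℕ) : shift m x⁻¹ = (shift m x)⁻¹ :=
  (MonoidHom.map_inv (shiftHom m) x)

lemma shift_zpow (m : ℕ) (x : Perm ℕ) (z : ℤ) : shift m (x ^ z) = (shift m x) ^ z :=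
  (MonoidHom.map_zpow (shiftHom m) x z)

lemma shift_shift (a b : ℕ) (x : Perm ℕ) : shift a (shift b x) = shift (a + b) x := by
  ext k
  simp only [shift_apply]
  by_cases h : k < a
  · rw [if_pos h, if_pos (by omega)]
  · rw [if_neg h]
    by_cases h2 : k - a < b
    · rw [if_pos h2, if_pos (by omega)]; omega
    · rw [if_neg h2, if_neg (by omega)]
      have : k - a - b = k - (a + b) := by omega
      rw [this]; omega

lemma shift_zero (x : Perm ℕ) : shift 0 x = x := by
  ext k; simp [shift_apply]

lemma shift_swap (m a b : ℕ) : shift m (Equiv.swap a b) = Equiv.swap (a + m) (b + m) := by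
  ext k
  simp only [shift_apply]
  by_cases h : k < m
  · rw [if_pos h, Equiv.swap_apply_of_ne_of_ne (by omega) (by omega)]
  · rw [if_neg h, Equiv.swap_apply_def, Equiv.swap_apply_def]
    split_ifs <;> omega

/-- points below `d` stay below `d` for a permutation fixing everything from `d` on. -/
lemma fix_lt {d : ℕ} {x : Perm ℕ} (hx : ∀ p, d ≤ p → x p = p) {r : ℕ} (hr : r < d) :
    x r < d := by
  by_contra h
  have h1 : x (x r) = x r := hx _ (by omega)
  have := x.injective h1
  omega

/-- The subgroup of permutations fixing everything from `d` on. -/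
def Sd (d : ℕ) : Subgroup (Perm ℕ) where
  carrier := {x | ∀ p, d ≤ p → x p = p}
  one_mem' := fun p _ => rfl
  mul_mem' := by
    intro a b ha hb p hp
    simp only [Perm.mul_apply, Set.mem_setOf_eq] at *
    rw [hb p hp, ha p hp]
  inv_mem' := by
    intro a ha p hp
    simp only [Set.mem_setOf_eq] at *
    have := ha p hp
    calc a⁻¹ p = a⁻¹ (a p) := by rw [this]
    _ = p := Perm.inv_apply_self a p

lemma mem_Sd {d : ℕ} {x : Perm ℕ} : x ∈ Sd d ↔ ∀ p, d ≤ p → x p = p := Iff.rfl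

/-- formula for shifted block permutation. -/
lemma blk_apply {d : ℕ} (hd : 0 < d) {x : Perm ℕ} (hx : x ∈ Sd d) (k p : ℕ) :
    shift (k * d) x p = if p / d = k then k * d + x (p % d) else p := by
  have hmod : d * (p / d) + p % d = p := Nat.div_add_mod p d
  have hlt : p % d < d := Nat.mod_lt p hd
  rw [shift_apply]
  by_cases h : p / d = k
  · have hp : k * d + p % d = p := by rw [Nat.mul_comm, ← h]; exact hmod
    rw [if_pos h, if_neg (by omega)]
    have h2 : p - k * d = p % d := by omega
    rw [h2]; omega
  · rw [if_neg h]
    by_cases h2 : p < k * d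
    · rw [if_pos h2]
    · rw [if_neg h2]
      have hk : k ≤ p / d := (Nat.le_div_iff_mul_le hd).2 (by omega)
      have hk1 : k + 1 ≤ p / d := by omega
      have hmul : d * (k + 1) ≤ d * (p / d) := Nat.mul_le_mul_left d hk1
      rw [Nat.mul_succ] at hmul
      have hdk : d * k = k * d := Nat.mul_comm d k
      have h3 : d ≤ p - k * d := by omega
      rw [hx _ h3]
      omega

end Stmt19


namespace Stmt19
open Equiv

lemma divmod_lemma {d : ℕ} (hd : 0 < d) (a r : ℕ) (hr : r < d) :
    (a * d + r) / d = a ∧ (a * d + r) % d = r := by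
  constructor
  · rw [Nat.add_comm, Nat.add_mul_div_right _ _ hd, Nat.div_eq_of_lt hr, Nat.zero_add]
  · rw [Nat.add_comm, Nat.add_mul_mod_self_right, Nat.mod_eq_of_lt hr]

/-- The rigid block permutation induced by `w` on blocks of size `d`. -/
def Lb (d : ℕ) (w : Perm ℕ) : Perm ℕ where
  toFun k := w (k / d) * d + k % d
  invFun k := w⁻¹ (k / d) * d + k % d
  left_inv k := by
    rcases Nat.eq_zero_or_pos d with h | h
    · subst h; simp
    · dsimp only
      obtain ⟨hdiv, hmod⟩ := divmod_lemma h (w (k / d)) (k % d) (Nat.mod_lt _ h)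
      rw [hdiv, hmod, Perm.inv_apply_self, Nat.div_add_mod']
  right_inv k := by
    rcases Nat.eq_zero_or_pos d with h | h
    · subst h; simp
    · dsimp only
      obtain ⟨hdiv, hmod⟩ := divmod_lemma h (w⁻¹ (k / d)) (k % d) (Nat.mod_lt _ h)
      rw [hdiv, hmod, Perm.apply_inv_self, Nat.div_add_mod']

lemma Lb_apply (d : ℕ) (w : Perm ℕ) (k : ℕ) : Lb d w k = w (k / d) * d + k % d := rfl

lemma Lb_one (d : ℕ) : Lb d 1 = 1 := by
  ext k; rw [Lb_apply, Perm.one_apply, Perm.one_apply, Nat.div_add_mod']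

lemma Lb_mul {d : ℕ} (hd : 0 < d) (w w' : Perm ℕ) : Lb d (w * w') = Lb d w * Lb d w' := by
  ext k
  simp only [Lb_apply, Perm.mul_apply]
  obtain ⟨hdiv, hmod⟩ := divmod_lemma hd (w' (k / d)) (k % d) (Nat.mod_lt _ hd)
  rw [hdiv, hmod]

lemma Lb_inv {d : ℕ} (hd : 0 < d) (w : Perm ℕ) : (Lb d w)⁻¹ = Lb d w⁻¹ := by
  rw [eq_comm, eq_inv_iff_mul_eq_one, ← Lb_mul hd, inv_mul_cancel, Lb_one]

lemma theta_eq {d : ℕ} (hd : 0 < d) : theta d = Lb d (Equiv.swap 0 1) := by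
  ext k
  have hmod : d * (k / d) + k % d = k := Nat.div_add_mod k d
  have hlt : k % d < d := Nat.mod_lt _ hd
  rw [Lb_apply]
  show (if k < d then k + d else if k < 2 * d then k - d else k) = _
  by_cases h0 : k < d
  · have hdiv : k / d = 0 := Nat.div_eq_of_lt h0
    rw [if_pos h0, hdiv, Equiv.swap_apply_left]
    have : k % d = k := Nat.mod_eq_of_lt h0
    omega
  · by_cases h1 : k < 2 * d
    · have hdiv : k / d = 1 := Nat.div_eq_of_lt_le (by omega) (by omega)
      rw [if_neg h0, if_pos h1, hdiv, Equiv.swap_apply_right]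
      have hm : k % d = k - d := by
        have := (divmod_lemma hd 1 (k - d) (by omega)).2
        rw [show 1 * d + (k - d) = k by omega] at this
        exact this
      omega
    · have hdiv : 2 ≤ k / d := (Nat.le_div_iff_mul_le hd).2 (by omega)
      rw [if_neg h0, if_neg h1,
        Equiv.swap_apply_of_ne_of_ne (by omega) (by omega)]
      have : d * (k / d) = (k / d) * d := Nat.mul_comm _ _
      omega

/-- Conjugation of a shifted block permutation by a rigid block permutation. -/
lemma Lb_conj {d : ℕ} (hd : 0 < d) (w : Perm ℕ) {x : Perm ℕ} (hx : x ∈ Sd d) (k : ℕ) :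
    Lb d w * shift (k * d) x * (Lb d w)⁻¹ = shift (w k * d) x := by
  rw [mul_inv_eq_iff_eq_mul]
  ext p
  have hlt : p % d < d := Nat.mod_lt _ hd
  have hxlt : x (p % d) < d := fix_lt hx hlt
  simp only [Perm.mul_apply, blk_apply hd hx, Lb_apply]
  obtain ⟨hdiv, hmod⟩ := divmod_lemma hd (w (p / d)) (p % d) hlt
  by_cases h : p / d = k
  · rw [if_pos h, h]
    obtain ⟨hdiv2, hmod2⟩ := divmod_lemma hd (w k) (p % d) hlt
    obtain ⟨hdiv3, hmod3⟩ := divmod_lemma hd k (x (p % d)) hxlt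
    rw [hdiv2, hmod2, if_pos rfl, hdiv3, hmod3]
  · rw [if_neg h, hdiv, hmod, if_neg (fun hc => h (w.injective hc))]

/-- Shifting a rigid block permutation. -/
lemma shift_Lb {d : ℕ} (hd : 0 < d) (m : ℕ) (w : Perm ℕ) :
    shift (m * d) (Lb d w) = Lb d (shift m w) := by
  ext k
  have hlt : k % d < d := Nat.mod_lt _ hd
  rw [shift_apply, Lb_apply, Lb_apply, shift_apply]
  have hcomm : m * d = d * m := Nat.mul_comm m d
  by_cases h : k < m * d
  · have : k / d < m := Nat.div_lt_of_lt_mul (by omega)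
    rw [if_pos h, if_pos this, Nat.div_add_mod']
  · have hge : m ≤ k / d := (Nat.le_div_iff_mul_le hd).2 (by omega)
    rw [if_neg h, if_neg (by omega : ¬ k / d < m)]
    have hmd : m * d = d * m := Nat.mul_comm m d
    have h1 : (k - m * d) / d = k / d - m := by
      rw [hmd]; exact Nat.sub_mul_div k d m
    have h2 : (k - m * d) % d = k % d := by
      rw [hmd]; exact Nat.sub_mul_mod (by omega)
    rw [h1, h2, Nat.add_mul]
    omega

end Stmt19


namespace Stmt19
open Equiv Finset

/-- Shifted permutations on distinct blocks commute. -/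
lemma blk_comm {d : ℕ} (hd : 0 < d) {x y : Perm ℕ} (hx : x ∈ Sd d) (hy : y ∈ Sd d)
    {j k : ℕ} (hjk : j ≠ k) : Commute (shift (j * d) x) (shift (k * d) y) := by
  have key : ∀ ⦃a b : ℕ⦄ (u v : Perm ℕ), u ∈ Sd d → v ∈ Sd d → a ≠ b → ∀ p,
      shift (a * d) u (shift (b * d) v p) =
        if p / d = a then a * d + u (p % d) else if p / d = b then b * d + v (p % d) else p := by
    intro a b u v hu hv hab p
    have hlt : p % d < d := Nat.mod_lt _ hd
    rw [blk_apply hd hv]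
    by_cases h : p / d = b
    · have hvlt : v (p % d) < d := fix_lt hv hlt
      obtain ⟨hdiv, hmod⟩ := divmod_lemma hd b (v (p % d)) hvlt
      rw [if_pos h, blk_apply hd hu, hdiv, hmod, if_neg (by omega), if_neg (by omega)]
    · rw [if_neg h, blk_apply hd hu]
  unfold Commute SemiconjBy
  ext p
  rw [Perm.mul_apply, Perm.mul_apply, key x y hx hy hjk p, key y x hy hx (Ne.symm hjk) p]
  split_ifs <;> omega

/-- noncommProd of inverses. -/
lemma noncommProd_inv {α : Type*} {G : Type*} [Group G] (s : Finset α) (v : α → G)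
    (comm : (s : Set α).Pairwise (Function.onFun Commute v)) :
    (s.noncommProd v comm)⁻¹ =
      s.noncommProd (fun a => (v a)⁻¹) (fun a ha b hb hab => ((comm ha hb hab).inv_inv)) := by
  classical
  induction s using Finset.cons_induction with
  | empty => erw [Finset.noncommProd_empty, inv_one]
  | cons a t ha ih =>
    erw [Finset.noncommProd_cons, Finset.noncommProd_cons', mul_inv_rev, ih]

/-- reindexing a noncommProd along an embedding. -/
lemma noncommProd_map' {α β : Type*} {G : Type*} [Monoid G] (s : Finset α) (e : α ↪ β)
    (v : β → G) (comm) :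
    (s.map e).noncommProd v comm =
      s.noncommProd (fun a => v (e a))
        (fun a ha b hb hab => comm (Finset.mem_map_of_mem e ha) (Finset.mem_map_of_mem e hb)
          (fun hc => hab (e.injective hc))) := by
  simp only [Finset.noncommProd, Finset.map_val, Multiset.map_map]
  rfl

lemma range_map_of_perm {n : ℕ} (w : Perm ℕ) (hw : ∀ k, n ≤ k → w k = k) :
    (Finset.range n).map ⟨w, w.injective⟩ = Finset.range n := by
  have hlt : ∀ k, k < n → w k < n := by
    intro k hk
    by_contra h
    have := hw _ (by omega : n ≤ w k)
    have := w.injective this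
    omega
  ext k
  simp only [Finset.mem_map, Finset.mem_range, Function.Embedding.coeFn_mk]
  constructor
  · rintro ⟨a, ha, rfl⟩; exact hlt a ha
  · intro hk
    refine ⟨w⁻¹ k, ?_, w.apply_inv_self k⟩
    by_contra h
    have h2 := hw _ (by omega : n ≤ w⁻¹ k)
    have : w (w⁻¹ k) = w⁻¹ k := by rw [h2]
    rw [w.apply_inv_self] at this
    omega

/-- peel the last factor off a product over `range (m+1)`. -/
lemma nprod_range_succ {G : Type*} [Monoid G] (v : ℕ → G) (m : ℕ) (comm) :
    (Finset.range (m + 1)).noncommProd v comm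
      = (Finset.range m).noncommProd v
          (comm.mono (by rw [Finset.coe_subset]; exact Finset.range_subset_range.2 (Nat.le_succ m)))
        * v m := by
  erw [Finset.noncommProd_congr Finset.range_add_one (fun x _ => rfl) comm,
    Finset.noncommProd_insert_of_notMem' _ _ _ _ (by simp)]

/-- product over `range m` supported at a single index. -/
lemma nprod_single {G : Type*} [Monoid G] {m i : ℕ} (v : ℕ → G) (comm)
    (hi : i < m) (hv : ∀ k, k < m → k ≠ i → v k = 1) :
    (Finset.range m).noncommProd v comm = v i := by
  induction m with
  | zero => omega
  | succ m ih =>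
    rw [nprod_range_succ]
    rcases Nat.lt_or_ge i m with h | h
    · rw [ih _ h (fun k hk hki => hv k (by omega) hki), hv m (by omega) (by omega), mul_one]
    · have : i = m := by omega
      subst this
      erw [Finset.noncommProd_eq_pow_card _ _ _ 1
        (fun x hx => hv x (by simp at hx; omega) (by simp at hx; omega)),
        one_pow, one_mul]

/-- product over `range m` supported at two indices `i < j`. -/
lemma nprod_pair {G : Type*} [Monoid G] {m i j : ℕ} (v : ℕ → G) (comm)
    (hij : i < j) (hj : j < m) (hv : ∀ k, k < m → k ≠ i → k ≠ j → v k = 1) :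
    (Finset.range m).noncommProd v comm = v i * v j := by
  induction m with
  | zero => omega
  | succ m ih =>
    rw [nprod_range_succ]
    rcases Nat.lt_or_ge j m with h | h
    · rw [ih _ h (fun k hk h1 h2 => hv k (by omega) h1 h2), hv m (by omega) (by omega) (by omega),
        mul_one]
    · have hje : j = m := by omega
      subst hje
      rw [nprod_single (i := i) _ _ (by omega)
        (fun k hk hki => hv k (by omega) hki (by omega))]

end Stmt19


namespace Stmt19
open Equiv Finset

/-- Conjugating a block product by a rigid block permutation reindexes the blocks. -/
lemma conj_reindex {d n : ℕ} (hd : 0 < d) (w : Perm ℕ) (f : ℕ → Perm ℕ)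
    (hf : ∀ k, f k ∈ Sd d) (hw : ∀ k, n ≤ k → w k = k) :
    Lb d w * (Finset.range n).noncommProd (fun k => shift (k * d) (f k))
        (fun a _ b _ hab => blk_comm hd (hf a) (hf b) hab)
      * (Lb d w)⁻¹
    = (Finset.range n).noncommProd (fun k => shift (k * d) (f (w⁻¹ k)))
        (fun a _ b _ hab => blk_comm hd (hf _) (hf _) hab) := by
  have h1 : Lb d w * (Finset.range n).noncommProd (fun k => shift (k * d) (f k))
        (fun a _ b _ hab => blk_comm hd (hf a) (hf b) hab) * (Lb d w)⁻¹
      = (MulAut.conj (Lb d w)).toMonoidHom ((Finset.range n).noncommProd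
          (fun k => shift (k * d) (f k)) (fun a _ b _ hab => blk_comm hd (hf a) (hf b) hab)) := by
    simp [MulAut.conj_apply, mul_assoc]
  erw [h1, Finset.map_noncommProd]
  have h2 : ∀ k, (MulAut.conj (Lb d w)).toMonoidHom (shift (k * d) (f k))
      = shift (w k * d) (f k) := by
    intro k
    show Lb d w * shift (k * d) (f k) * (Lb d w)⁻¹ = _
    exact Lb_conj hd w (hf k) k
  erw [Finset.noncommProd_congr rfl (fun x _ => h2 x)]
  -- now reindex along w
  have h3 := range_map_of_perm w hw
  have h4 := noncommProd_map' (Finset.range n) ⟨w, w.injective⟩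
      (fun k => shift (k * d) (f (w⁻¹ k)))
      (by rw [h3]; exact fun a _ b _ hab => blk_comm hd (hf _) (hf _) hab)
  rw [Finset.noncommProd_congr h3 (fun x _ => rfl)] at h4
  simp only [Function.Embedding.coeFn_mk, Perm.inv_apply_self] at h4
  rw [h4]

end Stmt19

namespace Stmt19
open Equiv Finset

variable {d n : ℕ} {ς₁ ς₂ τ : Perm ℕ}

/-- component of a block-diagonal element in normal form. -/
def Fc (ς₁ τ : Perm ℕ) (w : Perm ℕ) (b : ℕ → ℤ) (k : ℕ) : Perm ℕ :=
  ς₁ ^ ((k : ℤ) - ((w⁻¹ k : ℕ) : ℤ)) * τ ^ b k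

lemma Fc_mem_Sd (h₁ : ς₁ ∈ Sd d) (hτm : τ ∈ Sd d) (w : Perm ℕ) (b : ℕ → ℤ) (k : ℕ) :
    Fc ς₁ τ w b k ∈ Sd d :=
  mul_mem (zpow_mem h₁ _) (zpow_mem hτm _)

/-- the block-diagonal part in normal form. -/
def DD (d n : ℕ) (ς₁ τ : Perm ℕ) (hd : 0 < d) (h₁ : ς₁ ∈ Sd d) (hτm : τ ∈ Sd d)
    (w : Perm ℕ) (b : ℕ → ℤ) : Perm ℕ :=
  (Finset.range n).noncommProd (fun k => shift (k * d) (Fc ς₁ τ w b k))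
    (fun _ _ _ _ hab => blk_comm hd (Fc_mem_Sd h₁ hτm w b _) (Fc_mem_Sd h₁ hτm w b _) hab)

lemma mul_swap_mid {G : Type*} [Group G] {b c : G} (a e : G) (h : Commute b c) :
    a * b * (c * e) = a * c * (b * e) := by
  rw [mul_assoc, ← mul_assoc b c e, h.eq, mul_assoc c b e, ← mul_assoc]

lemma Fc_mul (hc : Commute ς₁ τ) (w w' : Perm ℕ) (b b' : ℕ → ℤ) (k : ℕ) :
    Fc ς₁ τ w b k * Fc ς₁ τ w' b' (w⁻¹ k)
      = Fc ς₁ τ (w * w') (fun j => b j + b' (w⁻¹ j)) k := by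
  unfold Fc
  have h1 : Commute (τ ^ b k) (ς₁ ^ (((w⁻¹ k : ℕ) : ℤ) - ((w'⁻¹ (w⁻¹ k) : ℕ) : ℤ))) :=
    (hc.symm).zpow_zpow _ _
  have h2 : ((w * w')⁻¹ k : ℕ) = w'⁻¹ (w⁻¹ k) := by
    rw [mul_inv_rev, Perm.mul_apply]
  rw [mul_swap_mid _ _ h1, ← zpow_add, ← zpow_add, h2]
  have h3 : (k : ℤ) - ((w⁻¹ k : ℕ) : ℤ) + (((w⁻¹ k : ℕ) : ℤ) - ((w'⁻¹ (w⁻¹ k) : ℕ) : ℤ))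
      = (k : ℤ) - ((w'⁻¹ (w⁻¹ k) : ℕ) : ℤ) := by ring
  rw [h3]

lemma Fc_inv (hc : Commute ς₁ τ) (w : Perm ℕ) (b : ℕ → ℤ) (k : ℕ) :
    (Fc ς₁ τ w b (w k))⁻¹ = Fc ς₁ τ w⁻¹ (fun j => -(b (w j))) k := by
  unfold Fc
  rw [mul_inv_rev, ← zpow_neg, ← zpow_neg, ((hc.symm.zpow_zpow _ _).eq :
    τ ^ (-(b (w k))) * ς₁ ^ (-((w k : ℤ) - ((w⁻¹ (w k) : ℕ) : ℤ)))
      = ς₁ ^ (-((w k : ℤ) - ((w⁻¹ (w k) : ℕ) : ℤ))) * τ ^ (-(b (w k))))]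
  rw [Perm.inv_apply_self, inv_inv]
  have h3 : -((w k : ℤ) - (k : ℤ)) = (k : ℤ) - ((w k : ℕ) : ℤ) := by ring
  rw [h3]

end Stmt19

namespace Stmt19
open Equiv Finset

variable {d n : ℕ} {ς₁ ς₂ τ : Perm ℕ}

lemma DD_mul (hd : 0 < d) (h₁' : ς₁ ∈ Sd d) (hτm : τ ∈ Sd d) (hc : Commute ς₁ τ)
    {w : Perm ℕ} (w' : Perm ℕ) (b b' : ℕ → ℤ) (hw : ∀ k, n ≤ k → w k = k) :
    (DD d n ς₁ τ hd h₁' hτm w b * Lb d w) * (DD d n ς₁ τ hd h₁' hτm w' b' * Lb d w')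
      = DD d n ς₁ τ hd h₁' hτm (w * w') (fun j => b j + b' (w⁻¹ j)) * Lb d (w * w') := by
  have key := conj_reindex hd w (fun k => Fc ς₁ τ w' b' k)
    (fun k => Fc_mem_Sd h₁' hτm w' b' k) hw
  have hexp : (DD d n ς₁ τ hd h₁' hτm w b * Lb d w)
        * (DD d n ς₁ τ hd h₁' hτm w' b' * Lb d w')
      = DD d n ς₁ τ hd h₁' hτm w b
        * (Lb d w * DD d n ς₁ τ hd h₁' hτm w' b' * (Lb d w)⁻¹) * (Lb d w * Lb d w') := by
    group
  rw [hexp]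
  unfold DD at key ⊢
  rw [key, ← Lb_mul hd]
  have hmd := Finset.noncommProd_mul_distrib
    (s := Finset.range n)
    (fun k => shift (k * d) (Fc ς₁ τ w b k))
    (fun k => shift (k * d) (Fc ς₁ τ w' b' (w⁻¹ k)))
    (fun _ _ _ _ hab => blk_comm hd (Fc_mem_Sd h₁' hτm w b _) (Fc_mem_Sd h₁' hτm w b _) hab)
    (fun _ _ _ _ hab => blk_comm hd (Fc_mem_Sd h₁' hτm w' b' _) (Fc_mem_Sd h₁' hτm w' b' _) hab)
    (fun _ _ _ _ hab => blk_comm hd (Fc_mem_Sd h₁' hτm w' b' _) (Fc_mem_Sd h₁' hτm w b _) hab)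
  rw [← hmd]
  congr 1
  exact Finset.noncommProd_congr rfl
    (fun x _ => by rw [Pi.mul_apply, ← shift_mul, Fc_mul hc]) _

lemma DD_inv (hd : 0 < d) (h₁' : ς₁ ∈ Sd d) (hτm : τ ∈ Sd d) (hc : Commute ς₁ τ)
    {w : Perm ℕ} (b : ℕ → ℤ) (hw : ∀ k, n ≤ k → w k = k) :
    (DD d n ς₁ τ hd h₁' hτm w b * Lb d w)⁻¹
      = DD d n ς₁ τ hd h₁' hτm w⁻¹ (fun j => -(b (w j))) * Lb d w⁻¹ := by
  have hwinv : ∀ k, n ≤ k → w⁻¹ k = k := by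
    intro k hk
    conv_lhs => rw [← hw k hk]
    exact Perm.inv_apply_self w k
  have key := conj_reindex hd w⁻¹ (fun k => (Fc ς₁ τ w b k)⁻¹)
    (fun k => inv_mem (Fc_mem_Sd h₁' hτm w b k)) hwinv
  have hstep : (DD d n ς₁ τ hd h₁' hτm w b * Lb d w)⁻¹
      = (Lb d w⁻¹ * (DD d n ς₁ τ hd h₁' hτm w b)⁻¹ * (Lb d w⁻¹)⁻¹) * Lb d w⁻¹ := by
    rw [← Lb_inv hd]; group
  rw [hstep]
  unfold DD at key ⊢
  erw [noncommProd_inv, Finset.noncommProd_congr rfl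
    (fun x _ => (shift_inv (x * d) (Fc ς₁ τ w b x)).symm), key]
  congr 1
  exact Finset.noncommProd_congr rfl
    (fun x _ => by show shift (x * d) ((Fc ς₁ τ w b (w x))⁻¹) = _; rw [Fc_inv hc]) _

lemma DD_one (hd : 0 < d) (h₁' : ς₁ ∈ Sd d) (hτm : τ ∈ Sd d) :
    DD d n ς₁ τ hd h₁' hτm 1 (fun _ => 0) = 1 := by
  unfold DD
  erw [Finset.noncommProd_eq_pow_card _ _ _ 1 (fun x _ => ?_), one_pow]
  have : Fc ς₁ τ 1 (fun _ => 0) x = 1 := by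
    unfold Fc
    simp
  rw [this, shift_one]

lemma DD_commute_t (hd : 0 < d) (h₁' : ς₁ ∈ Sd d) (hτm : τ ∈ Sd d) (hc : Commute ς₁ τ)
    (w : Perm ℕ) (b : ℕ → ℤ) (j : ℕ) :
    Commute (DD d n ς₁ τ hd h₁' hτm w b) (shift (j * d) τ) := by
  unfold DD
  refine Finset.noncommProd_induction _ _ _ (fun x => Commute x (shift (j * d) τ))
    (fun a b' ha hb => ha.mul_left hb) (Commute.one_left _) (fun k _ => ?_)
  rcases eq_or_ne k j with h | h
  · subst h
    have hFc : Commute (Fc ς₁ τ w b k) τ :=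
      Commute.mul_left (hc.zpow_left _) ((Commute.refl τ).zpow_left _)
    exact hFc.map (shiftHom (k * d))
  · exact blk_comm hd (Fc_mem_Sd h₁' hτm w b k) hτm h

end Stmt19

namespace Stmt19
open Equiv Finset

variable {d n : ℕ} {ς₁ ς₂ τ : Perm ℕ}

lemma gen_decomp (hd : 0 < d) (hn : 3 ≤ n) (h₁' : ς₁ ∈ Sd d) (h₂' : ς₂ ∈ Sd d)
    (hτm : τ ∈ Sd d) (hτ : ς₁ * ς₂ = τ) {s : ℕ} (hs1 : 1 ≤ s) (hs2 : s ≤ n - 1) :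
    shift ((s - 1) * d) (theta d * ς₁ * shift d ς₂)
      = DD d n ς₁ τ hd h₁' hτm (Equiv.swap (s - 1) s) (fun k => if k = s - 1 then 1 else 0)
        * Lb d (Equiv.swap (s - 1) s) := by
  obtain ⟨t, rfl⟩ : ∃ t, s = t + 1 := ⟨s - 1, by omega⟩
  have hsn : t + 1 < n := by omega
  simp only [Nat.add_sub_cancel]
  set w : Perm ℕ := Equiv.swap t (t + 1) with hw
  -- left hand side decomposition
  have lhs_eq : shift (t * d) (theta d * ς₁ * shift d ς₂)
      = Lb d w * shift (t * d) ς₁ * shift ((t + 1) * d) ς₂ := by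
    rw [shift_mul, shift_mul, theta_eq hd, shift_Lb hd, shift_swap, shift_shift]
    have e1 : 0 + t = t := by omega
    have e2 : 1 + t = t + 1 := by omega
    have e3 : t * d + d = (t + 1) * d := by rw [Nat.succ_mul]
    rw [e1, e2, e3]
  rw [lhs_eq]
  -- move Lb to the right
  have e4 : Lb d w * shift (t * d) ς₁ = shift ((t + 1) * d) ς₁ * Lb d w := by
    have := Lb_conj hd w h₁' t
    rw [mul_inv_eq_iff_eq_mul] at this
    rw [this, Equiv.swap_apply_left]
  have e5 : Lb d w * shift ((t + 1) * d) ς₂ = shift (t * d) ς₂ * Lb d w := by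
    have := Lb_conj hd w h₂' (t + 1)
    rw [mul_inv_eq_iff_eq_mul] at this
    rw [this, Equiv.swap_apply_right]
  have lhs_eq2 : Lb d w * shift (t * d) ς₁ * shift ((t + 1) * d) ς₂
      = shift (t * d) ς₂ * shift ((t + 1) * d) ς₁ * Lb d w := by
    rw [e4, mul_assoc, e5, ← mul_assoc,
      (blk_comm hd h₁' h₂' (by omega : (t + 1 : ℕ) ≠ t)).eq]
  rw [lhs_eq2]
  congr 1
  -- identify the block-diagonal parts
  have hDD : DD d n ς₁ τ hd h₁' hτm w (fun k => if k = t then 1 else 0)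
      = shift (t * d) (Fc ς₁ τ w (fun k => if k = t then 1 else 0) t)
        * shift ((t + 1) * d) (Fc ς₁ τ w (fun k => if k = t then 1 else 0) (t + 1)) := by
    unfold DD
    exact nprod_pair _ _ (by omega) hsn (fun k hk h1 h2 => by
      have hfix : w⁻¹ k = k := by
        rw [Equiv.swap_inv, Equiv.swap_apply_of_ne_of_ne h1 h2]
      have hb : (fun k => if k = t then (1 : ℤ) else 0) k = 0 := by simp [h1]
      have : Fc ς₁ τ w (fun k => if k = t then 1 else 0) k = 1 := by
        unfold Fc
        rw [hfix, hb]
        simp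
      rw [this, shift_one])
  rw [hDD]
  have hF1 : Fc ς₁ τ w (fun k => if k = t then 1 else 0) t = ς₂ := by
    have hx : w⁻¹ t = t + 1 := by rw [Equiv.swap_inv, Equiv.swap_apply_left]
    have hb : (fun k => if k = t then (1 : ℤ) else 0) t = 1 := by simp
    unfold Fc
    rw [hx, hb]
    have hcast : (t : ℤ) - ((t + 1 : ℕ) : ℤ) = -1 := by push_cast; ring
    rw [hcast, zpow_neg_one, zpow_one, ← hτ, inv_mul_cancel_left]
  have hF2 : Fc ς₁ τ w (fun k => if k = t then 1 else 0) (t + 1) = ς₁ := by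
    have hx : w⁻¹ (t + 1) = t := by rw [Equiv.swap_inv, Equiv.swap_apply_right]
    have hb : (fun k => if k = t then (1 : ℤ) else 0) (t + 1) = 0 := by simp
    unfold Fc
    rw [hx, hb]
    have hcast : ((t + 1 : ℕ) : ℤ) - (t : ℤ) = 1 := by push_cast; ring
    rw [hcast, zpow_one, zpow_zero, mul_one]
  rw [hF1, hF2]

end Stmt19

namespace Stmt19
open Equiv Finset

variable {d n : ℕ} {ς₁ ς₂ τ : Perm ℕ}

lemma swap_fix {s n k : ℕ} (hs1 : 1 ≤ s) (hs2 : s ≤ n - 1) (hn : 3 ≤ n) (hk : n ≤ k) :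
    Equiv.swap (s - 1) s k = k :=
  Equiv.swap_apply_of_ne_of_ne (by omega) (by omega)

lemma invariant (hd : 0 < d) (hn : 3 ≤ n) (h₁' : ς₁ ∈ Sd d) (h₂' : ς₂ ∈ Sd d)
    (hτm : τ ∈ Sd d) (hτ : ς₁ * ς₂ = τ) (hc : Commute ς₁ τ) :
    ∀ g ∈ Subgroup.closure {x : Perm ℕ | ∃ s, 1 ≤ s ∧ s ≤ n - 1
        ∧ x = shift ((s - 1) * d) (theta d * ς₁ * shift d ς₂)},
      ∃ (w : Perm ℕ) (b : ℕ → ℤ), (∀ k, n ≤ k → w k = k)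
        ∧ g = DD d n ς₁ τ hd h₁' hτm w b * Lb d w := by
  intro g hg
  refine Subgroup.closure_induction ?_ ?_ ?_ ?_ hg
  · rintro x ⟨s, hs1, hs2, rfl⟩
    exact ⟨Equiv.swap (s - 1) s, fun k => if k = s - 1 then 1 else 0,
      fun k hk => swap_fix hs1 hs2 hn hk,
      gen_decomp hd hn h₁' h₂' hτm hτ hs1 hs2⟩
  · refine ⟨1, fun _ => 0, fun k _ => rfl, ?_⟩
    rw [DD_one, Lb_one, mul_one]
  · rintro x y hx hy ⟨w, b, hwf, rfl⟩ ⟨w', b', hwf', rfl⟩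
    exact ⟨w * w', fun j => b j + b' (w⁻¹ j),
      fun k hk => by rw [Perm.mul_apply, hwf' k hk, hwf k hk],
      DD_mul hd h₁' hτm hc w' b b' hwf⟩
  · rintro x hx ⟨w, b, hwf, rfl⟩
    refine ⟨w⁻¹, fun j => -(b (w j)), fun k hk => ?_, DD_inv hd h₁' hτm hc b hwf⟩
    conv_lhs => rw [← hwf k hk]
    exact Perm.inv_apply_self w k

lemma conj_t (hd : 0 < d) (h₁' : ς₁ ∈ Sd d) (hτm : τ ∈ Sd d) (hc : Commute ς₁ τ)
    {w : Perm ℕ} {b : ℕ → ℤ} {g : Perm ℕ}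
    (hg : g = DD d n ς₁ τ hd h₁' hτm w b * Lb d w) (j : ℕ) :
    g * shift (j * d) τ * g⁻¹ = shift (w j * d) τ := by
  subst hg
  have h1 : DD d n ς₁ τ hd h₁' hτm w b * Lb d w * shift (j * d) τ
        * (DD d n ς₁ τ hd h₁' hτm w b * Lb d w)⁻¹
      = DD d n ς₁ τ hd h₁' hτm w b * (Lb d w * shift (j * d) τ * (Lb d w)⁻¹)
        * (DD d n ς₁ τ hd h₁' hτm w b)⁻¹ := by
    group
  rw [h1, Lb_conj hd w hτm j, (DD_commute_t hd h₁' hτm hc w b (w j)).eq,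
    mul_inv_cancel_right]

lemma DD_w1_pair (hd : 0 < d) (h₁' : ς₁ ∈ Sd d) (hτm : τ ∈ Sd d)
    {i j : ℕ} (hij : i < j) (hjn : j < n) (b : ℕ → ℤ)
    (hbi : b i = 1) (hbj : b j = 1) (hb : ∀ k, k ≠ i → k ≠ j → b k = 0) :
    DD d n ς₁ τ hd h₁' hτm 1 b = shift (i * d) τ * shift (j * d) τ := by
  unfold DD
  erw [nprod_pair _ _ hij hjn (fun k _ h1 h2 => by
    have hF : Fc ς₁ τ 1 b k = 1 := by
      unfold Fc
      rw [hb k h1 h2]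
      simp
    rw [hF, shift_one])]
  have h1 : Fc ς₁ τ 1 b i = τ := by unfold Fc; rw [hbi]; simp
  have h2 : Fc ς₁ τ 1 b j = τ := by unfold Fc; rw [hbj]; simp
  rw [h1, h2]

lemma gen_sq (hd : 0 < d) (hn : 3 ≤ n) (h₁' : ς₁ ∈ Sd d) (h₂' : ς₂ ∈ Sd d)
    (hτm : τ ∈ Sd d) (hτ : ς₁ * ς₂ = τ) (hc : Commute ς₁ τ)
    {s : ℕ} (hs1 : 1 ≤ s) (hs2 : s ≤ n - 1) :
    shift ((s - 1) * d) (theta d * ς₁ * shift d ς₂)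
      * shift ((s - 1) * d) (theta d * ς₁ * shift d ς₂)
      = shift ((s - 1) * d) τ * shift (s * d) τ := by
  have hg := gen_decomp (n := n) hd hn h₁' h₂' hτm hτ hs1 hs2
  rw [hg, DD_mul hd h₁' hτm hc _ _ _ (fun k hk => swap_fix hs1 hs2 hn hk),
    Equiv.swap_mul_self, Lb_one, mul_one]
  refine DD_w1_pair hd h₁' hτm (by omega : s - 1 < s) (by omega : s < n) _ ?_ ?_ ?_
  · show (if s - 1 = s - 1 then (1 : ℤ) else 0)
      + (if (Equiv.swap (s - 1) s)⁻¹ (s - 1) = s - 1 then (1 : ℤ) else 0) = 1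
    rw [if_pos rfl, Equiv.swap_inv, Equiv.swap_apply_left, if_neg (by omega)]
    ring
  · show (if s = s - 1 then (1 : ℤ) else 0)
      + (if (Equiv.swap (s - 1) s)⁻¹ s = s - 1 then (1 : ℤ) else 0) = 1
    rw [if_neg (by omega), Equiv.swap_inv, Equiv.swap_apply_right, if_pos rfl]
    ring
  · intro k hk1 hk2
    show (if k = s - 1 then (1 : ℤ) else 0)
      + (if (Equiv.swap (s - 1) s)⁻¹ k = s - 1 then (1 : ℤ) else 0) = 0
    rw [if_neg hk1, Equiv.swap_inv, Equiv.swap_apply_of_ne_of_ne hk1 hk2, if_neg hk1]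
    ring

end Stmt19

namespace Stmt19
open Equiv Finset

variable {d n : ℕ} {ς₁ ς₂ τ : Perm ℕ}

lemma DD_w1_mem (hd : 0 < d) (h₁' : ς₁ ∈ Sd d) (hτm : τ ∈ Sd d) (b : ℕ → ℤ)
    (S : Subgroup (Perm ℕ)) (hS : ∀ k, k < n → shift (k * d) τ ∈ S) :
    DD d n ς₁ τ hd h₁' hτm 1 b ∈ S := by
  unfold DD
  refine Finset.noncommProd_induction _ _ _ (· ∈ S) (fun _ _ => mul_mem) (one_mem S)
    (fun k hk => ?_)
  have hF : Fc ς₁ τ 1 b k = τ ^ (b k) := by unfold Fc; simp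
  rw [hF, shift_zpow]
  exact zpow_mem (hS k (Finset.mem_range.mp hk)) _

lemma mul_self_eq_aux {x y z : Perm ℕ} (hxy : Commute x y) :
    x * x = (x * y) * (x * z) * (y * z)⁻¹ := by
  have e : y * (x * z) = x * (y * z) := by rw [← mul_assoc, ← hxy.eq, mul_assoc]
  rw [mul_assoc x y, e, ← mul_assoc, mul_inv_cancel_right]

end Stmt19


open Stmt19 Equiv

/-- Injectivity of the monodromy homomorphism `m : Sₙ → Aut(Aₙ(σ))` (for `q ≥ 3`):
since `Aₙ(σ)` is abelian, conjugation gives a well-defined action of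
`Sₙ ≅ Bₙ(σ)/Aₙ(σ)` on `Aₙ(σ)`, and injectivity of `m` says exactly that any element
of `Bₙ(σ)` acting trivially by conjugation on `Aₙ(σ)` lies in `Aₙ(σ)`. -/
theorem stmt_19 (d n : ℕ) (hd : 2 ≤ d) (hn : 3 ≤ n) (ς₁ ς₂ τ : Equiv.Perm ℕ)
    (h₁ : ∀ k, d ≤ k → ς₁ k = k) (h₂ : ∀ k, d ≤ k → ς₂ k = k)
    (hτ : ς₁ * ς₂ = τ) (hτ' : ς₂ * ς₁ = τ)
    (σ : Equiv.Perm ℕ) (hσ : σ = theta d * ς₁ * shift d ς₂)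
    (σs : ℕ → Equiv.Perm ℕ) (hσs : ∀ s, σs s = shift ((s - 1) * d) σ)
    (B T A : Subgroup (Equiv.Perm ℕ))
    (hB : B = Subgroup.closure {x | ∃ s, 1 ≤ s ∧ s ≤ n - 1 ∧ x = σs s})
    (hT : T = Subgroup.closure {x | ∃ k < n, x ∈ Subgroup.zpowers (shift (k * d) τ)})
    (hA : A = B ⊓ T)
    (hq : 3 ≤ orderOf τ) :
    ∀ g ∈ B, (∀ a ∈ A, g * a * g⁻¹ = a) → g ∈ A := by
  intro g hgB hgc
  have hd0 : 0 < d := by omega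
  have h₁m : ς₁ ∈ Sd d := h₁
  have h₂m : ς₂ ∈ Sd d := h₂
  have hτm : τ ∈ Sd d := by rw [← hτ]; exact mul_mem h₁m h₂m
  have h12 : Commute ς₁ ς₂ := hτ.trans hτ'.symm
  have hc : Commute ς₁ τ := hτ ▸ ((Commute.refl ς₁).mul_right h12)
  -- rewrite the generating set
  have hBset : {x : Perm ℕ | ∃ s, 1 ≤ s ∧ s ≤ n - 1 ∧ x = σs s}
      = {x : Perm ℕ | ∃ s, 1 ≤ s ∧ s ≤ n - 1
          ∧ x = shift ((s - 1) * d) (theta d * ς₁ * shift d ς₂)} := by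
    ext x
    constructor
    · rintro ⟨s, ha, hb, rfl⟩; exact ⟨s, ha, hb, by rw [hσs, hσ]⟩
    · rintro ⟨s, ha, hb, rfl⟩; exact ⟨s, ha, hb, by rw [hσs, hσ]⟩
  have hgB' : g ∈ Subgroup.closure {x : Perm ℕ | ∃ s, 1 ≤ s ∧ s ≤ n - 1
      ∧ x = shift ((s - 1) * d) (theta d * ς₁ * shift d ς₂)} := by
    rw [hB, hBset] at hgB; exact hgB
  obtain ⟨w, b, hwfix, hgeq⟩ := invariant hd0 hn h₁m h₂m hτm hτ hc g hgB'
  -- basic t-facts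
  have htT : ∀ j, j < n → shift (j * d) τ ∈ T := by
    intro j hj
    rw [hT]
    exact Subgroup.subset_closure ⟨j, hj, Subgroup.mem_zpowers _⟩
  have hgenB : ∀ s, 1 ≤ s → s ≤ n - 1 → σs s ∈ B := by
    intro s ha hb
    rw [hB]
    exact Subgroup.subset_closure ⟨s, ha, hb, rfl⟩
  have hct : ∀ a c : ℕ, a ≠ c → Commute (shift (a * d) τ) (shift (c * d) τ) :=
    fun a c hac => blk_comm hd0 hτm hτm hac
  have hconj_g : ∀ j, g * shift (j * d) τ * g⁻¹ = shift (w j * d) τ :=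
    conj_t hd0 h₁m hτm hc hgeq
  have hconj_gen : ∀ s, 1 ≤ s → s ≤ n - 1 → ∀ j,
      σs s * shift (j * d) τ * (σs s)⁻¹ = shift ((Equiv.swap (s - 1) s) j * d) τ := by
    intro s ha hb j
    exact conj_t hd0 h₁m hτm hc
      (by rw [hσs, hσ]; exact gen_decomp hd0 hn h₁m h₂m hτm hτ ha hb) j
  -- pairs t_j t_k belong to B
  have hpairB : ∀ c j k : ℕ, k = j + 1 + c → k < n →
      shift (j * d) τ * shift (k * d) τ ∈ B := by
    intro c
    induction c with
    | zero =>
      intro j k hk hkn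
      subst hk
      have hval := gen_sq (n := n) hd0 hn h₁m h₂m hτm hτ hc
        (s := j + 1) (by omega) (by omega)
      simp only [Nat.add_sub_cancel] at hval
      rw [← hval, ← hσ]
      have : shift (j * d) σ = σs (j + 1) := by rw [hσs, Nat.add_sub_cancel]
      rw [this]
      exact mul_mem (hgenB _ (by omega) (by omega)) (hgenB _ (by omega) (by omega))
    | succ c ih =>
      intro j k hk hkn
      have hkB := ih j (k - 1) (by omega) (by omega)
      have hs1 : 1 ≤ k := by omega
      have hs2 : k ≤ n - 1 := by omega
      have e : σs k * (shift (j * d) τ * shift ((k - 1) * d) τ) * (σs k)⁻¹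
          = (σs k * shift (j * d) τ * (σs k)⁻¹)
            * (σs k * shift ((k - 1) * d) τ * (σs k)⁻¹) := by group
      have hval : σs k * (shift (j * d) τ * shift ((k - 1) * d) τ) * (σs k)⁻¹
          = shift (j * d) τ * shift (k * d) τ := by
        rw [e, hconj_gen k hs1 hs2 j, hconj_gen k hs1 hs2 (k - 1),
          Equiv.swap_apply_of_ne_of_ne (by omega) (by omega), Equiv.swap_apply_left]
      rw [← hval]
      exact mul_mem (mul_mem (hgenB k hs1 hs2) hkB) (inv_mem (hgenB k hs1 hs2))
  have htt : ∀ j k : ℕ, j ≠ k → j < n → k < n →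
      shift (j * d) τ * shift (k * d) τ ∈ A := by
    intro j k hjk hjn hkn
    rcases Nat.lt_or_ge j k with h | h
    · rw [hA]
      exact ⟨hpairB (k - j - 1) j k (by omega) hkn, mul_mem (htT j hjn) (htT k hkn)⟩
    · rw [(hct j k hjk).eq, hA]
      exact ⟨hpairB (j - k - 1) k j (by omega) hjn, mul_mem (htT k hkn) (htT j hjn)⟩
  have hsq : ∀ j, j < n → shift (j * d) τ * shift (j * d) τ ∈ A := by
    intro j hjn
    obtain ⟨p, r, hp, hr, hpr, hpn, hrn⟩ : ∃ p r : ℕ, p ≠ j ∧ r ≠ j ∧ p ≠ r ∧ p < n ∧ r < n := by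
      rcases eq_or_ne j 0 with h0 | h0
      · exact ⟨1, 2, by omega, by omega, by omega, by omega, by omega⟩
      · rcases eq_or_ne j 1 with h1 | h1
        · exact ⟨0, 2, by omega, by omega, by omega, by omega, by omega⟩
        · exact ⟨0, 1, by omega, by omega, by omega, by omega, by omega⟩
    rw [mul_self_eq_aux (y := shift (p * d) τ) (z := shift (r * d) τ)
      (hct j p (Ne.symm hp))]
    exact mul_mem (mul_mem (htt j p (Ne.symm hp) hjn hpn) (htt j r (Ne.symm hr) hjn hrn))
      (inv_mem (htt p r hpr hpn hrn))
  have haj : ∀ j, j + 1 < n → shift (j * d) τ * (shift ((j + 1) * d) τ)⁻¹ ∈ A := by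
    intro j hj
    have e : shift (j * d) τ * (shift ((j + 1) * d) τ)⁻¹
        = (shift (j * d) τ * shift ((j + 1) * d) τ)
          * (shift ((j + 1) * d) τ * shift ((j + 1) * d) τ)⁻¹ := by group
    rw [e]
    exact mul_mem (htt j (j + 1) (by omega) (by omega) hj) (inv_mem (hsq (j + 1) hj))
  -- the key equations
  have heq : ∀ j, j + 1 < n →
      shift (w j * d) τ * (shift (w (j + 1) * d) τ)⁻¹
        = shift (j * d) τ * (shift ((j + 1) * d) τ)⁻¹ := by
    intro j hj
    have h0 := hgc _ (haj j hj)
    calc shift (w j * d) τ * (shift (w (j + 1) * d) τ)⁻¹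
        = (g * shift (j * d) τ * g⁻¹) * (g * shift ((j + 1) * d) τ * g⁻¹)⁻¹ := by
          rw [hconj_g, hconj_g]
      _ = g * (shift (j * d) τ * (shift ((j + 1) * d) τ)⁻¹) * g⁻¹ := by group
      _ = shift (j * d) τ * (shift ((j + 1) * d) τ)⁻¹ := h0
  -- points moved by τ and τ²
  have hτne : τ ≠ 1 := by
    intro h; rw [h, orderOf_one] at hq; omega
  obtain ⟨r₀, hr₀⟩ : ∃ r, τ r ≠ r := by
    by_contra h; push_neg at h; exact hτne (Equiv.ext h)
  have hr₀d : r₀ < d := by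
    by_contra h; exact hr₀ (hτm r₀ (by omega))
  have hτ2 : τ * τ ≠ 1 := by
    intro h
    have h2 : τ ^ 2 = 1 := by rw [pow_two]; exact h
    have := Nat.le_of_dvd (by norm_num) (orderOf_dvd_of_pow_eq_one h2)
    omega
  obtain ⟨r₁, hr₁⟩ : ∃ r, τ (τ r) ≠ r := by
    by_contra h; push_neg at h
    exact hτ2 (Equiv.ext fun r => by rw [Perm.mul_apply, h r, Perm.one_apply])
  have hr₁d : r₁ < d := by
    by_contra h
    have e1 : τ r₁ = r₁ := hτm r₁ (by omega)
    exact hr₁ (by rw [e1, e1])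
  have hτinv : τ⁻¹ ∈ Sd d := inv_mem hτm
  -- w fixes 0,…,n-2
  have hwj : ∀ j, j + 1 < n → w j = j := by
    intro j hj
    have hne : w j ≠ w (j + 1) := fun h => by have := w.injective h; omega
    by_contra hwjne
    have happ := Equiv.ext_iff.mp (heq j hj)
    rcases eq_or_ne (w j) (j + 1) with hcase | hcase
    · -- evaluate at (j+1)*d + r₁
      obtain ⟨hpdiv, hpmod⟩ := divmod_lemma hd0 (j + 1) r₁ hr₁d
      have h1 := happ ((j + 1) * d + r₁)
      rw [Perm.mul_apply, Perm.mul_apply, ← shift_inv, ← shift_inv,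
        blk_apply hd0 hτinv, hpdiv, if_neg (by omega : ¬ (j + 1 : ℕ) = w (j + 1)),
        blk_apply hd0 hτm, hpdiv, if_pos (by omega : (j + 1 : ℕ) = w j), hpmod,
        blk_apply hd0 hτinv, hpdiv, if_pos rfl, hpmod] at h1
      obtain ⟨hqdiv, hqmod⟩ := divmod_lemma hd0 (j + 1) (τ⁻¹ r₁) (fix_lt hτinv hr₁d)
      rw [blk_apply hd0 hτm, hqdiv, if_neg (by omega), hcase] at h1
      have h2 : τ r₁ = τ⁻¹ r₁ := by omega
      exact hr₁ (by rw [h2, Perm.apply_inv_self])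
    · -- evaluate at (w j)*d + r₀
      obtain ⟨hpdiv, hpmod⟩ := divmod_lemma hd0 (w j) r₀ hr₀d
      have h1 := happ (w j * d + r₀)
      rw [Perm.mul_apply, Perm.mul_apply, ← shift_inv, ← shift_inv,
        blk_apply hd0 hτinv, hpdiv, if_neg hne,
        blk_apply hd0 hτm, hpdiv, if_pos rfl, hpmod,
        blk_apply hd0 hτinv, hpdiv, if_neg (by omega : ¬ w j = j + 1),
        blk_apply hd0 hτm, hpdiv, if_neg (by omega : ¬ w j = j)] at h1
      exact hr₀ (by omega)
  -- conclude w = 1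
  have hwlast : w (n - 1) = n - 1 := by
    set m := w (n - 1) with hm
    rcases Nat.lt_or_ge m n with hlt | hge
    · rcases Nat.lt_or_ge m (n - 1) with h2 | h2
      · have e1 : w m = m := hwj m (by omega)
        have := w.injective (e1.trans hm)
        omega
      · omega
    · have e1 : w m = m := hwfix m hge
      have := w.injective (e1.trans hm)
      omega
  have hw1 : w = 1 := by
    ext k
    rw [Perm.one_apply]
    rcases Nat.lt_or_ge k n with hk | hk
    · rcases Nat.lt_or_ge k (n - 1) with hk2 | hk2
      · exact hwj k (by omega)
      · have : k = n - 1 := by omega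
        rw [this, hwlast]
    · exact hwfix k hk
  rw [hw1, Lb_one, mul_one] at hgeq
  rw [hA]
  refine ⟨hgB, ?_⟩
  rw [hgeq]
  exact DD_w1_mem hd0 h₁m hτm b T htT
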